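/- For 0 < H < 1/2, define ψ₀ : (-π/2, π/2) × ℝ → ℝ³ by ψ₀(x,y) = (1/√(1-4H²))·(tan x, sinh y/cos x + 2H²e^{-y}cos x, cosh y/cos x - 2H²e^{-y}cos x) and η₀(x,y) = (2H/√(1-4H²))·(y - log cos x). Then ψ₀ takes values in ℍ², and Ψ₀ = (ψ₀, η₀) is a conformal map into ℍ² × ℝ with conformal factor |Ψ₀_x|² = |Ψ₀_y|² = 1/((1-4H²)cos²x) and ⟨Ψ₀_x, Ψ₀_y⟩ = 0. -/

import Mathlib

/-- Lorentz inner product on ℝ³₁. -/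
def lorentzInner (u v : Fin 3 → ℝ) : ℝ := u 0 * v 0 + u 1 * v 1 - u 2 * v 2

set_option maxHeartbeats 1000000 in
/-- For `0 < H < 1/2`, the map `Ψ₀ = (ψ₀, η₀) : (-π/2,π/2) × ℝ → ℍ² × ℝ` is
conformal with conformal factor `1/((1-4H²)cos²x)`: `ψ₀` takes values in ℍ² and
`|Ψ₀_x|² = |Ψ₀_y|² = 1/((1-4H²)cos²x)`, `⟨Ψ₀_x, Ψ₀_y⟩ = 0`. -/
theorem stmt11 (H : ℝ) (hH0 : 0 < H) (hH : H < 1 / 2)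
    (ψ : ℝ → ℝ → Fin 3 → ℝ) (η : ℝ → ℝ → ℝ)
    (hψ : ψ = fun x y => fun i => (1 / Real.sqrt (1 - 4 * H ^ 2)) *
      (![Real.tan x,
         Real.sinh y / Real.cos x + 2 * H ^ 2 * Real.exp (-y) * Real.cos x,
         Real.cosh y / Real.cos x - 2 * H ^ 2 * Real.exp (-y) * Real.cos x] i))
    (hη : η = fun x y => (2 * H / Real.sqrt (1 - 4 * H ^ 2)) *
      (y - Real.log (Real.cos x))) :
    ∀ x ∈ Set.Ioo (-(Real.pi / 2)) (Real.pi / 2), ∀ y : ℝ,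
      (lorentzInner (ψ x y) (ψ x y) = -1 ∧ 0 < ψ x y 2) ∧
      lorentzInner (deriv (fun t => ψ t y) x) (deriv (fun t => ψ t y) x)
        + (deriv (fun t => η t y) x) ^ 2
        = 1 / ((1 - 4 * H ^ 2) * (Real.cos x) ^ 2) ∧
      lorentzInner (deriv (fun t => ψ x t) y) (deriv (fun t => ψ x t) y)
        + (deriv (fun t => η x t) y) ^ 2
        = 1 / ((1 - 4 * H ^ 2) * (Real.cos x) ^ 2) ∧
      lorentzInner (deriv (fun t => ψ t y) x) (deriv (fun t => ψ x t) y)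
        + (deriv (fun t => η t y) x) * (deriv (fun t => η x t) y) = 0 := by
  have h4 : (0:ℝ) < 1 - 4 * H ^ 2 := by nlinarith
  have hq2 : Real.sqrt (1 - 4 * H ^ 2) ^ 2 = 1 - 4 * H ^ 2 := Real.sq_sqrt h4.le
  have hqpos : 0 < Real.sqrt (1 - 4 * H ^ 2) := Real.sqrt_pos.2 h4
  set q := Real.sqrt (1 - 4 * H ^ 2) with hqdef
  have hk : (1 / q) ^ 2 = 1 / (1 - 4 * H ^ 2) := by rw [div_pow, hq2, one_pow]
  subst hψ hη
  intro x hx y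
  have hC : 0 < Real.cos x := Real.cos_pos_of_mem_Ioo hx
  have hCne : Real.cos x ≠ 0 := hC.ne'
  have hEpos : 0 < Real.exp y := Real.exp_pos y
  have hEne : Real.exp y ≠ 0 := hEpos.ne'
  have hE : Real.exp (-y) = (Real.exp y)⁻¹ := Real.exp_neg y
  -- derivative of (cos t)⁻¹ at x
  have hinv : HasDerivAt (fun t => (Real.cos t)⁻¹) (Real.sin x / Real.cos x ^ 2) x := by
    have : HasDerivAt (fun t => (Real.cos t)⁻¹) (- -Real.sin x / Real.cos x ^ 2) x :=
      (Real.hasDerivAt_cos x).inv hCne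
    convert this using 1
    ring
  -- x-derivatives of components
  have d0x : HasDerivAt (fun t => (1/q) * Real.tan t) ((1/q) * (1 / Real.cos x ^ 2)) x :=
    (Real.hasDerivAt_tan hCne).const_mul _
  have d1x : HasDerivAt
      (fun t => (1/q) * (Real.sinh y / Real.cos t + 2*H^2*Real.exp (-y)*Real.cos t))
      ((1/q) * (Real.sinh y * (Real.sin x / Real.cos x ^ 2)
        + 2*H^2*Real.exp (-y) * (-Real.sin x))) x := by
    have h1 : HasDerivAt (fun t => Real.sinh y / Real.cos t)
        (Real.sinh y * (Real.sin x / Real.cos x ^ 2)) x := by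
      simpa [div_eq_mul_inv] using hinv.const_mul (Real.sinh y)
    have h2 : HasDerivAt (fun t => 2*H^2*Real.exp (-y) * Real.cos t)
        (2*H^2*Real.exp (-y) * (-Real.sin x)) x :=
      (Real.hasDerivAt_cos x).const_mul _
    exact (h1.add h2).const_mul _
  have d2x : HasDerivAt
      (fun t => (1/q) * (Real.cosh y / Real.cos t - 2*H^2*Real.exp (-y)*Real.cos t))
      ((1/q) * (Real.cosh y * (Real.sin x / Real.cos x ^ 2)
        - 2*H^2*Real.exp (-y) * (-Real.sin x))) x := by
    have h1 : HasDerivAt (fun t => Real.cosh y / Real.cos t)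
        (Real.cosh y * (Real.sin x / Real.cos x ^ 2)) x := by
      simpa [div_eq_mul_inv] using hinv.const_mul (Real.cosh y)
    have h2 : HasDerivAt (fun t => 2*H^2*Real.exp (-y) * Real.cos t)
        (2*H^2*Real.exp (-y) * (-Real.sin x)) x :=
      (Real.hasDerivAt_cos x).const_mul _
    exact (h1.sub h2).const_mul _
  have dηx : HasDerivAt (fun t => (2*H/q) * (y - Real.log (Real.cos t)))
      ((2*H/q) * (0 - (-Real.sin x / Real.cos x))) x := by
    have h1 : HasDerivAt (fun t => Real.log (Real.cos t)) (-Real.sin x / Real.cos x) x := by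
      simpa using ((Real.hasDerivAt_cos x).log hCne)
    exact ((hasDerivAt_const x y).sub h1).const_mul _
  -- y-derivatives of components
  have d0y : HasDerivAt (fun _ : ℝ => (1/q) * Real.tan x) 0 y := hasDerivAt_const _ _
  have hexpneg : HasDerivAt (fun t : ℝ => Real.exp (-t)) (-Real.exp (-y)) y := by
    simpa using ((hasDerivAt_id y).neg.exp)
  have d1y : HasDerivAt
      (fun t => (1/q) * (Real.sinh t / Real.cos x + 2*H^2*Real.exp (-t)*Real.cos x))
      ((1/q) * (Real.cosh y / Real.cos x + 2*H^2*(-Real.exp (-y))*Real.cos x)) y := by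
    have h1 : HasDerivAt (fun t => Real.sinh t / Real.cos x) (Real.cosh y / Real.cos x) y :=
      (Real.hasDerivAt_sinh y).div_const _
    have h2 : HasDerivAt (fun t => 2*H^2*Real.exp (-t)*Real.cos x)
        (2*H^2*(-Real.exp (-y))*Real.cos x) y :=
      (hexpneg.const_mul (2*H^2)).mul_const (Real.cos x)
    exact (h1.add h2).const_mul _
  have d2y : HasDerivAt
      (fun t => (1/q) * (Real.cosh t / Real.cos x - 2*H^2*Real.exp (-t)*Real.cos x))
      ((1/q) * (Real.sinh y / Real.cos x - 2*H^2*(-Real.exp (-y))*Real.cos x)) y := by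
    have h1 : HasDerivAt (fun t => Real.cosh t / Real.cos x) (Real.sinh y / Real.cos x) y :=
      (Real.hasDerivAt_cosh y).div_const _
    have h2 : HasDerivAt (fun t => 2*H^2*Real.exp (-t)*Real.cos x)
        (2*H^2*(-Real.exp (-y))*Real.cos x) y :=
      (hexpneg.const_mul (2*H^2)).mul_const (Real.cos x)
    exact (h1.sub h2).const_mul _
  have dηy : HasDerivAt (fun t => (2*H/q) * (t - Real.log (Real.cos x))) ((2*H/q) * 1) y :=
    ((hasDerivAt_id y).sub_const _).const_mul _
  -- assemble vector derivatives
  have DX : deriv (fun t => (fun i => (1/q) *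
      (![Real.tan t,
         Real.sinh y / Real.cos t + 2*H^2*Real.exp (-y)*Real.cos t,
         Real.cosh y / Real.cos t - 2*H^2*Real.exp (-y)*Real.cos t] i))) x
      = ![(1/q) * (1 / Real.cos x ^ 2),
          (1/q) * (Real.sinh y * (Real.sin x / Real.cos x ^ 2)
            + 2*H^2*Real.exp (-y) * (-Real.sin x)),
          (1/q) * (Real.cosh y * (Real.sin x / Real.cos x ^ 2)
            - 2*H^2*Real.exp (-y) * (-Real.sin x))] := by
    apply HasDerivAt.deriv
    apply hasDerivAt_pi.2
    intro i
    fin_cases i <;>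
      simp only [Matrix.cons_val_zero, Matrix.cons_val_one, Matrix.head_cons, Fin.isValue,
        Matrix.cons_val_two, Matrix.tail_cons]
    · exact d0x
    · exact d1x
    · exact d2x
  have DY : deriv (fun t => (fun i => (1/q) *
      (![Real.tan x,
         Real.sinh t / Real.cos x + 2*H^2*Real.exp (-t)*Real.cos x,
         Real.cosh t / Real.cos x - 2*H^2*Real.exp (-t)*Real.cos x] i))) y
      = ![0,
          (1/q) * (Real.cosh y / Real.cos x + 2*H^2*(-Real.exp (-y))*Real.cos x),
          (1/q) * (Real.sinh y / Real.cos x - 2*H^2*(-Real.exp (-y))*Real.cos x)] := by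
    apply HasDerivAt.deriv
    apply hasDerivAt_pi.2
    intro i
    fin_cases i <;>
      simp only [Matrix.cons_val_zero, Matrix.cons_val_one, Matrix.head_cons, Fin.isValue,
        Matrix.cons_val_two, Matrix.tail_cons]
    · exact d0y
    · exact d1y
    · exact d2y
  have Dηx : deriv (fun t => (2*H/q) * (y - Real.log (Real.cos t))) x
      = (2*H/q) * (0 - (-Real.sin x / Real.cos x)) := dηx.deriv
  have Dηy : deriv (fun t => (2*H/q) * (t - Real.log (Real.cos x))) y
      = (2*H/q) * 1 := dηy.deriv
  have hq2' : q * q = 1 - 4 * H ^ 2 := by nlinarith [hq2]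
  have hsc := Real.sin_sq_add_cos_sq x
  have hsinh : Real.sinh y = (Real.exp y - (Real.exp y)⁻¹) / 2 := by
    rw [Real.sinh_eq, hE]
  have hcosh : Real.cosh y = (Real.exp y + (Real.exp y)⁻¹) / 2 := by
    rw [Real.cosh_eq, hE]
  have key : ∀ a b : ℝ, (1/q*a) * (1/q*b) = (a*b) * (1/(1-4*H^2)) := by
    intro a b; rw [← hk]; ring
  have key2 : ∀ a : ℝ, (2*H/q*a)^2 = (4*H^2*a^2) * (1/(1-4*H^2)) := by
    intro a; rw [← hk]; ring
  have key3 : ∀ a b : ℝ, (2*H/q*a) * (2*H/q*b) = (4*H^2*(a*b)) * (1/(1-4*H^2)) := by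
    intro a b; rw [← hk]; ring
  have hS2 : Real.sin x ^ 2 = 1 - Real.cos x ^ 2 := by nlinarith [hsc]
  refine ⟨⟨?_, ?_⟩, ?_, ?_, ?_⟩
  · simp only [lorentzInner, Matrix.cons_val_zero, Matrix.cons_val_one, Matrix.head_cons,
      Matrix.cons_val_two, Matrix.tail_cons, Real.tan_eq_sin_div_cos, key]
    rw [hsinh, hcosh, hE]
    field_simp
    ring_nf
    rw [hS2]
    ring
  · simp only [Matrix.cons_val_two, Matrix.tail_cons, Matrix.head_cons]
    rw [hcosh, hE]
    have hc1 : Real.cos x ^ 2 ≤ 1 := by nlinarith [hsc, sq_nonneg (Real.sin x)]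
    have hinvE : 0 < (Real.exp y)⁻¹ := inv_pos.2 hEpos
    have hH2 : 4 * H ^ 2 < 1 := by nlinarith
    have hkey : 0 < (Real.exp y + (Real.exp y)⁻¹) / 2 / Real.cos x
        - 2 * H ^ 2 * (Real.exp y)⁻¹ * Real.cos x := by
      rw [sub_pos, div_div, lt_div_iff₀ (by positivity)]
      nlinarith [mul_pos hinvE hC, mul_pos (mul_pos hinvE hC) hC, hEpos]
    have hq1 : 0 < 1 / q := by positivity
    nlinarith [mul_pos hq1 hkey]
  · rw [DX, Dηx]
    simp only [lorentzInner, Matrix.cons_val_zero, Matrix.cons_val_one, Matrix.head_cons,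
      Matrix.cons_val_two, Matrix.tail_cons, key, key2]
    rw [hsinh, hcosh, hE]
    field_simp
    ring_nf
    rw [hS2]
    ring
  · rw [DY, Dηy]
    simp only [lorentzInner, Matrix.cons_val_zero, Matrix.cons_val_one, Matrix.head_cons,
      Matrix.cons_val_two, Matrix.tail_cons, key, key2]
    rw [hsinh, hcosh, hE]
    field_simp
    ring_nf
  · rw [DX, DY, Dηx, Dηy]
    simp only [lorentzInner, Matrix.cons_val_zero, Matrix.cons_val_one, Matrix.head_cons,
      Matrix.cons_val_two, Matrix.tail_cons, key, key3]
    rw [hsinh, hcosh, hE]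
    field_simp
    ring_nf
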